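/- Let (X, 𝒲_n) be a numerical radius operator space and let φ : X → M_n(ℂ) be a linear map, where for each k the matrix space M_k(M_n(ℂ)) is identified with M_{kn}(ℂ) and equipped with the numerical radius norm w. Then 𝒲(φ)_cb = 𝒲(φ_n); that is, the 𝒲-completely bounded norm of φ is attained at level n. -/

import Mathlib

open scoped ComplexOrder Matrix ENNReal TensorProduct

universe u v

noncomputable section

/-- The block-diagonal sum `x ⊕ y` of two square matrices. -/
def blockDiag {X : Type*} [Zero X] {m n : ℕ} (x : Matrix (Fin m) (Fin m) X)
    (y : Matrix (Fin n) (Fin n) X) : Matrix (Fin (m + n)) (Fin (m + n)) X :=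
  Matrix.submatrix (Matrix.fromBlocks x 0 0 y) finSumFinEquiv.symm finSumFinEquiv.symm

/-- The block matrix `[[0, x], [0, 0]]` with `x` in the upper-right corner. -/
def cornerBlock {X : Type*} [Zero X] {n : ℕ} (x : Matrix (Fin n) (Fin n) X) :
    Matrix (Fin (n + n)) (Fin (n + n)) X :=
  Matrix.submatrix (Matrix.fromBlocks 0 x 0 0) finSumFinEquiv.symm finSumFinEquiv.symm

/-- Multiplication `α x` of a scalar matrix with a matrix over a ℂ-module. -/
def scalarMulLeft {X : Type*} [AddCommMonoid X] [Module ℂ X] {m n k : ℕ}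
    (α : Matrix (Fin m) (Fin n) ℂ) (x : Matrix (Fin n) (Fin k) X) :
    Matrix (Fin m) (Fin k) X :=
  Matrix.of fun i j => ∑ l, α i l • x l j

/-- Multiplication `x β` of a matrix over a ℂ-module with a scalar matrix. -/
def scalarMulRight {X : Type*} [AddCommMonoid X] [Module ℂ X] {m n k : ℕ}
    (x : Matrix (Fin m) (Fin n) X) (β : Matrix (Fin n) (Fin k) ℂ) :
    Matrix (Fin m) (Fin k) X :=
  Matrix.of fun i j => ∑ l, β l j • x i l

/-- Operator norm of a rectangular complex matrix, as an operator ℓ²(Fin n) → ℓ²(Fin m). -/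
def matOpNorm {m n : ℕ} (α : Matrix (Fin m) (Fin n) ℂ) : ℝ :=
  ‖LinearMap.toContinuousLinearMap (Matrix.toEuclideanLin α)‖

/-- The numerical radius of a bounded operator on a complex inner product space. -/
def numRadius {H : Type*} [NormedAddCommGroup H] [InnerProductSpace ℂ H]
    (a : H →L[ℂ] H) : ℝ :=
  ⨆ ξ : {ξ : H // ‖ξ‖ ≤ 1}, ‖(inner ℂ (ξ : H) (a ξ) : ℂ)‖

/-- The bounded operator `Hⁿ → Hᵐ` induced by an `m × n` matrix of bounded operators,
where `Hⁿ` carries the ℓ²-direct sum structure. -/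
def matOpRect {H : Type*} [NormedAddCommGroup H] [InnerProductSpace ℂ H] {m n : ℕ}
    (a : Matrix (Fin m) (Fin n) (H →L[ℂ] H)) :
    (PiLp 2 fun _ : Fin n => H) →L[ℂ] (PiLp 2 fun _ : Fin m => H) :=
  ((PiLp.continuousLinearEquiv 2 ℂ (fun _ : Fin m => H)).symm.toContinuousLinearMap) ∘L
    (ContinuousLinearMap.pi fun i => ∑ j, (a i j).comp (ContinuousLinearMap.proj j)) ∘L
    ((PiLp.continuousLinearEquiv 2 ℂ (fun _ : Fin n => H)).toContinuousLinearMap)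

/-- The bounded operator on `Hⁿ` induced by an `n × n` matrix of bounded operators. -/
def matOp {H : Type*} [NormedAddCommGroup H] [InnerProductSpace ℂ H] {n : ℕ}
    (a : Matrix (Fin n) (Fin n) (H →L[ℂ] H)) :
    (PiLp 2 fun _ : Fin n => H) →L[ℂ] (PiLp 2 fun _ : Fin n => H) :=
  matOpRect a

/-- The numerical radius of a complex `n × n` matrix, acting on `ℂⁿ`. -/
def matNumRadius {n : ℕ} (a : Matrix (Fin n) (Fin n) ℂ) : ℝ :=
  numRadius (LinearMap.toContinuousLinearMap (Matrix.toEuclideanLin a))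

/-- The identification of `M_k(M_n(ℂ))` with `M_{kn}(ℂ)`. -/
def flatten {k n : ℕ} (x : Matrix (Fin k) (Fin k) (Matrix (Fin n) (Fin n) ℂ)) :
    Matrix (Fin (k * n)) (Fin (k * n)) ℂ :=
  Matrix.of fun i j =>
    x (finProdFinEquiv.symm i).1 (finProdFinEquiv.symm j).1
      (finProdFinEquiv.symm i).2 (finProdFinEquiv.symm j).2

/-- An (abstract) numerical radius operator space: a complex vector space `X` together with a
norm `W n` on each matrix space `M_n(X)` satisfying the conditions (WI) and (WII). -/
structure NRNorm (X : Type u) [AddCommGroup X] [Module ℂ X] where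
  W : ∀ n : ℕ, Matrix (Fin n) (Fin n) X → ℝ
  nonneg : ∀ (n : ℕ) (x : Matrix (Fin n) (Fin n) X), 0 ≤ W n x
  eq_zero_iff : ∀ (n : ℕ) (x : Matrix (Fin n) (Fin n) X), W n x = 0 ↔ x = 0
  add_le : ∀ (n : ℕ) (x y : Matrix (Fin n) (Fin n) X), W n (x + y) ≤ W n x + W n y
  smul_eq : ∀ (n : ℕ) (c : ℂ) (x : Matrix (Fin n) (Fin n) X), W n (c • x) = ‖c‖ * W n x
  cond_WI : ∀ (m n : ℕ) (x : Matrix (Fin m) (Fin m) X) (y : Matrix (Fin n) (Fin n) X),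
    W (m + n) (blockDiag x y) = max (W m x) (W n y)
  cond_WII : ∀ (m n : ℕ) (α : Matrix (Fin n) (Fin m) ℂ) (x : Matrix (Fin m) (Fin m) X),
    W n (scalarMulRight (scalarMulLeft α x) αᴴ) ≤ matOpNorm α ^ 2 * W m x

/-- An (abstract) operator space: a complex vector space `X` together with a norm `O n` on each
matrix space `M_n(X)` satisfying Ruan's axioms (OI) and (OII). -/
structure OSNorm (X : Type u) [AddCommGroup X] [Module ℂ X] where
  O : ∀ n : ℕ, Matrix (Fin n) (Fin n) X → ℝ
  nonneg : ∀ (n : ℕ) (x : Matrix (Fin n) (Fin n) X), 0 ≤ O n x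
  eq_zero_iff : ∀ (n : ℕ) (x : Matrix (Fin n) (Fin n) X), O n x = 0 ↔ x = 0
  add_le : ∀ (n : ℕ) (x y : Matrix (Fin n) (Fin n) X), O n (x + y) ≤ O n x + O n y
  smul_eq : ∀ (n : ℕ) (c : ℂ) (x : Matrix (Fin n) (Fin n) X), O n (c • x) = ‖c‖ * O n x
  cond_OI : ∀ (m n : ℕ) (x : Matrix (Fin m) (Fin m) X) (y : Matrix (Fin n) (Fin n) X),
    O (m + n) (blockDiag x y) = max (O m x) (O n y)
  cond_OII : ∀ (m n : ℕ) (α : Matrix (Fin n) (Fin m) ℂ) (x : Matrix (Fin m) (Fin m) X)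
    (β : Matrix (Fin m) (Fin n) ℂ),
    O n (scalarMulRight (scalarMulLeft α x) β) ≤ matOpNorm α * O m x * matOpNorm β

/-- The completely bounded norm (valued in `[0, ∞]`) of a linear map, with respect to given
matrix norm sequences on the domain and the codomain. -/
def cbNorm {X Y : Type*} (WX : ∀ n : ℕ, Matrix (Fin n) (Fin n) X → ℝ)
    (WY : ∀ n : ℕ, Matrix (Fin n) (Fin n) Y → ℝ) (φ : X → Y) : ℝ≥0∞ :=
  ⨆ (n : ℕ) (x : Matrix (Fin n) (Fin n) X) (_ : WX n x ≤ 1),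
    ENNReal.ofReal (WY n (x.map φ))

/-- The maximal numerical radius norm affiliated with an operator space `(X, 𝒪_n)`. -/
def Wmax {X : Type u} [AddCommGroup X] [Module ℂ X] (OS : OSNorm X)
    (n : ℕ) (x : Matrix (Fin n) (Fin n) X) : ℝ :=
  sInf {t | ∃ (r : ℕ) (a : Matrix (Fin n) (Fin r) ℂ) (y : Matrix (Fin r) (Fin r) X)
      (b : Matrix (Fin r) (Fin n) ℂ),
    x = scalarMulRight (scalarMulLeft a y) b ∧ OS.O r y = 1 ∧
      t = (1 / 2) * matOpNorm (a * aᴴ + bᴴ * b)}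

/-- A complex Hilbert space together with a linear map of `X` into its bounded operators. -/
structure HilbertRep (X : Type u) [AddCommGroup X] [Module ℂ X] where
  H : Type u
  [instN : NormedAddCommGroup H]
  [instI : InnerProductSpace ℂ H]
  [instC : CompleteSpace H]
  Φ : X →ₗ[ℂ] (H →L[ℂ] H)

attribute [instance] HilbertRep.instN HilbertRep.instI HilbertRep.instC

end

section Aux

open Finset

lemma euclideanCLM_apply {m l : ℕ} (A : Matrix (Fin m) (Fin l) ℂ) (v : EuclideanSpace ℂ (Fin l))
    (i : Fin m) :
    (LinearMap.toContinuousLinearMap (Matrix.toEuclideanLin A) v) i = ∑ j, A i j * v j := by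
  simp [Matrix.toEuclideanLin_apply, Matrix.mulVec, dotProduct, WithLp.equiv]

lemma inner_quad {m : ℕ} (A : Matrix (Fin m) (Fin m) ℂ) (v : EuclideanSpace ℂ (Fin m)) :
    (inner ℂ v (LinearMap.toContinuousLinearMap (Matrix.toEuclideanLin A) v) : ℂ) =
      ∑ i, ∑ j, (starRingEnd ℂ) (v i) * (A i j * v j) := by
  rw [PiLp.inner_apply]
  refine Finset.sum_congr rfl fun i _ => ?_
  rw [euclideanCLM_apply, RCLike.inner_apply, mul_comm (∑ j, A i j * v j), Finset.mul_sum]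

end Aux
section Aux2

instance numRadius_nonempty_inst {H : Type*} [NormedAddCommGroup H] : Nonempty {ξ : H // ‖ξ‖ ≤ 1} :=
  ⟨⟨0, by simp⟩⟩

lemma numRadius_bddAbove {H : Type*} [NormedAddCommGroup H] [InnerProductSpace ℂ H]
    (a : H →L[ℂ] H) :
    BddAbove (Set.range fun ξ : {ξ : H // ‖ξ‖ ≤ 1} => ‖(inner ℂ (ξ : H) (a ξ) : ℂ)‖) := by
  refine ⟨‖a‖, ?_⟩
  rintro r ⟨ξ, rfl⟩
  calc ‖(inner ℂ (ξ : H) (a ξ) : ℂ)‖ ≤ ‖(ξ : H)‖ * ‖a ξ‖ := norm_inner_le_norm _ _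
    _ ≤ 1 * (‖a‖ * 1) := by
        refine mul_le_mul ξ.2 ?_ (norm_nonneg _) zero_le_one
        calc ‖a ξ‖ ≤ ‖a‖ * ‖(ξ : H)‖ := a.le_opNorm _
          _ ≤ ‖a‖ * 1 := by nlinarith [ξ.2, norm_nonneg a, norm_nonneg (ξ : H)]
    _ = ‖a‖ := by ring

lemma le_numRadius {H : Type*} [NormedAddCommGroup H] [InnerProductSpace ℂ H]
    (a : H →L[ℂ] H) (v : H) (hv : ‖v‖ ≤ 1) :
    ‖(inner ℂ v (a v) : ℂ)‖ ≤ numRadius a :=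
  le_ciSup (numRadius_bddAbove a) (⟨v, hv⟩ : {ξ : H // ‖ξ‖ ≤ 1})

lemma numRadius_le {H : Type*} [NormedAddCommGroup H] [InnerProductSpace ℂ H]
    (a : H →L[ℂ] H) (c : ℝ) (h : ∀ v : H, ‖v‖ ≤ 1 → ‖(inner ℂ v (a v) : ℂ)‖ ≤ c) :
    numRadius a ≤ c :=
  Real.iSup_le (fun ξ => h ξ ξ.2) (le_trans (by simpa using h 0 (by simp)) (by simpa using h 0 (by simp)))

end Aux2
section Aux3

lemma euclid_norm_sq {l : ℕ} (v : EuclideanSpace ℂ (Fin l)) :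
    ‖v‖ ^ 2 = ∑ i, ‖v i‖ ^ 2 := by
  rw [EuclideanSpace.norm_eq, Real.sq_sqrt (by positivity)]

lemma matOpNorm_conjTranspose {m l : ℕ} (A : Matrix (Fin m) (Fin l) ℂ) :
    matOpNorm Aᴴ = matOpNorm A := by
  unfold matOpNorm
  rw [Matrix.toEuclideanLin_conjTranspose_eq_adjoint, LinearMap.adjoint_toContinuousLinearMap]
  exact ContinuousLinearMap.adjoint.norm_map _

lemma matOpNorm_le {m l : ℕ} (A : Matrix (Fin m) (Fin l) ℂ) (c : ℝ) (hc : 0 ≤ c)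
    (h : ∀ v : EuclideanSpace ℂ (Fin l),
      ∑ i, ‖∑ j, A i j * v j‖ ^ 2 ≤ c ^ 2 * ∑ j, ‖v j‖ ^ 2) :
    matOpNorm A ≤ c := by
  refine ContinuousLinearMap.opNorm_le_bound _ hc fun v => ?_
  have h1 : ‖LinearMap.toContinuousLinearMap (Matrix.toEuclideanLin A) v‖ ^ 2 ≤ (c * ‖v‖) ^ 2 := by
    rw [euclid_norm_sq, mul_pow]
    calc ∑ i, ‖(LinearMap.toContinuousLinearMap (Matrix.toEuclideanLin A) v) i‖ ^ 2
        = ∑ i, ‖∑ j, A i j * v j‖ ^ 2 :=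
          Finset.sum_congr rfl fun i _ => by rw [euclideanCLM_apply]
      _ ≤ c ^ 2 * ∑ j, ‖v j‖ ^ 2 := h v
      _ = c ^ 2 * ‖v‖ ^ 2 := by rw [euclid_norm_sq]
  nlinarith [norm_nonneg (LinearMap.toContinuousLinearMap (Matrix.toEuclideanLin A) v),
    mul_nonneg hc (norm_nonneg v)]

end Aux3
section Aux4

lemma sumCollapse {A B M : Type*} [Fintype A] [Fintype B] [AddCommMonoid M] (f : A → B → M) :
    ∑ a, ∑ b, f a b = ∑ z : A × B, f z.1 z.2 :=
  (Fintype.sum_prod_type (f := fun z : A × B => f z.1 z.2)).symm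

lemma flatten_pair {m l : ℕ} (z : Matrix (Fin m) (Fin m) (Matrix (Fin l) (Fin l) ℂ))
    (u v : Fin m × Fin l) :
    flatten z (finProdFinEquiv u) (finProdFinEquiv v) = z u.1 v.1 u.2 v.2 := by
  show z (finProdFinEquiv.symm (finProdFinEquiv u)).1 (finProdFinEquiv.symm (finProdFinEquiv v)).1
    (finProdFinEquiv.symm (finProdFinEquiv u)).2 (finProdFinEquiv.symm (finProdFinEquiv v)).2 = _
  rw [Equiv.symm_apply_apply, Equiv.symm_apply_apply]
end Aux4
section Compress

open Matrix Finset

set_option maxHeartbeats 2000000 in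
lemma compress {X : Type u} [AddCommGroup X] [Module ℂ X] (W : NRNorm X) {n k : ℕ}
    (φ : X →ₗ[ℂ] Matrix (Fin n) (Fin n) ℂ) (x : Matrix (Fin k) (Fin k) X) (hx : W.W k x ≤ 1)
    (ξ : EuclideanSpace ℂ (Fin (k * n))) (hξ : ‖ξ‖ ≤ 1) :
    ∃ y : Matrix (Fin n) (Fin n) X, W.W n y ≤ 1 ∧
      ‖(inner ℂ ξ (LinearMap.toContinuousLinearMap
          (Matrix.toEuclideanLin (flatten (Matrix.map x ⇑φ))) ξ) : ℂ)‖
        ≤ matNumRadius (flatten (Matrix.map y ⇑φ)) := by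
  classical
  set pair : Fin k → Fin n → Fin (k * n) := fun p s => finProdFinEquiv (p, s) with hpair
  set M : Matrix (Fin k) (Fin n) ℂ := Matrix.of (fun p s => ξ (pair p s)) with hM
  have hP : (Mᴴ * M).PosSemidef := Matrix.posSemidef_conjTranspose_mul_self M
  set lam : Fin n → ℝ := hP.1.eigenvalues with hlamdef
  have hlam : ∀ r, 0 ≤ lam r := fun r => hP.eigenvalues_nonneg r
  set U : Matrix (Fin n) (Fin n) ℂ := (hP.1.eigenvectorUnitary : Matrix (Fin n) (Fin n) ℂ)
    with hU
  have hU1 : Uᴴ * U = 1 := by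
    rw [← Matrix.star_eq_conjTranspose]
    exact Unitary.star_mul_self_of_mem hP.1.eigenvectorUnitary.2
  have hU2 : U * Uᴴ = 1 := by
    rw [← Matrix.star_eq_conjTranspose]
    exact Unitary.mul_star_self_of_mem hP.1.eigenvectorUnitary.2
  have spec : Uᴴ * (Mᴴ * M) * U = Matrix.diagonal (fun r => (lam r : ℂ)) := by
    rw [← Matrix.star_eq_conjTranspose]
    have h := hP.1.conjStarAlgAut_star_eigenvectorUnitary
    rw [Unitary.conjStarAlgAut_star_apply] at h
    exact h
  set β : Matrix (Fin k) (Fin n) ℂ := M * U with hβ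
  have hββ : βᴴ * β = Matrix.diagonal (fun r => (lam r : ℂ)) := by
    rw [hβ, Matrix.conjTranspose_mul, ← spec]
    simp only [Matrix.mul_assoc]
  have hdiagentry : ∀ r r', (βᴴ * β) r r' = ∑ p, (starRingEnd ℂ) (β p r) * β p r' := by
    intro r r'
    rw [Matrix.mul_apply]
    exact Finset.sum_congr rfl fun p _ => by rw [Matrix.conjTranspose_apply]; rfl
  have hlamsum : ∀ r, (lam r : ℂ) = ∑ p, (‖β p r‖ ^ 2 : ℝ) := by
    intro r
    have h1 : (βᴴ * β) r r = (lam r : ℂ) := by rw [hββ, Matrix.diagonal_apply_eq]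
    rw [← h1, hdiagentry]
    push_cast
    exact Finset.sum_congr rfl fun p _ => by
      rw [← Complex.normSq_eq_conj_mul_self, Complex.normSq_eq_norm_sq]
      push_cast
      ring
  have hlamsum' : ∀ r, lam r = ∑ p, ‖β p r‖ ^ 2 := by
    intro r
    have := hlamsum r
    exact_mod_cast this
  have hcol : ∀ r, lam r = 0 → ∀ p, β p r = 0 := by
    intro r hr p
    have h0 : ∑ q, ‖β q r‖ ^ 2 = 0 := by rw [← hlamsum' r, hr]
    have := (Finset.sum_eq_zero_iff_of_nonneg (fun q _ => by positivity)).mp h0 p (Finset.mem_univ p)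
    have : ‖β p r‖ = 0 := by nlinarith [norm_nonneg (β p r)]
    simpa using this
  set g : Fin n → ℂ := fun r => if lam r = 0 then 0 else ((Real.sqrt (lam r))⁻¹ : ℝ) with hg
  set e : Fin n → ℂ := fun r => if lam r = 0 then 0 else 1 with he
  set αm : Matrix (Fin k) (Fin n) ℂ := Matrix.of (fun p r => β p r * g r) with hαm
  set ηv : Fin n → Fin n → ℂ := fun r s => ((Real.sqrt (lam r) : ℝ) : ℂ) * star (U s r) with hηv
  have hge : ∀ r, g r * ((Real.sqrt (lam r) : ℝ) : ℂ) = e r := by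
    intro r
    by_cases h : lam r = 0
    · simp [hg, he, h]
    · have hpos : 0 < lam r := lt_of_le_of_ne (hlam r) (Ne.symm h)
      have : Real.sqrt (lam r) ≠ 0 := ne_of_gt (Real.sqrt_pos.mpr hpos)
      simp only [hg, he, if_neg h]
      rw [← Complex.ofReal_mul, inv_mul_cancel₀ this, Complex.ofReal_one]
  have hβUH : β * Uᴴ = M := by rw [hβ, Matrix.mul_assoc, hU2, Matrix.mul_one]
  have key : ∀ p s, ∑ r, αm p r * ηv r s = M p s := by
    intro p s
    have h1 : ∀ r, αm p r * ηv r s = β p r * star (U s r) := by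
      intro r
      show β p r * g r * (((Real.sqrt (lam r) : ℝ) : ℂ) * star (U s r)) = _
      rw [mul_assoc, ← mul_assoc (g r), hge r]
      by_cases h : lam r = 0
      · simp [he, h, hcol r h p]
      · simp [he, h]
    rw [Finset.sum_congr rfl fun r _ => h1 r]
    have : (β * Uᴴ) p s = ∑ r, β p r * star (U s r) := by
      rw [Matrix.mul_apply]
      exact Finset.sum_congr rfl fun r _ => by rw [Matrix.conjTranspose_apply]
    rw [← this, hβUH]
  have hterm : ∀ z : ℂ, (starRingEnd ℂ) z * z = ((‖z‖ ^ 2 : ℝ) : ℂ) := fun z => by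
    rw [← Complex.normSq_eq_conj_mul_self, Complex.normSq_eq_norm_sq]
  have hαd : αmᴴ * αm = Matrix.diagonal e := by
    ext r r'
    rw [Matrix.mul_apply]
    have h1 : ∀ p, (αmᴴ) r p * αm p r' =
        (starRingEnd ℂ) (g r) * g r' * ((starRingEnd ℂ) (β p r) * β p r') := by
      intro p
      rw [Matrix.conjTranspose_apply]
      show star (β p r * g r) * (β p r' * g r') = _
      simp only [star_mul', RCLike.star_def]
      ring
    rw [Finset.sum_congr rfl fun p _ => h1 p, ← Finset.mul_sum, ← hdiagentry, hββ]
    by_cases h : r = r'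
    · subst h
      rw [Matrix.diagonal_apply_eq, Matrix.diagonal_apply_eq]
      by_cases h0 : lam r = 0
      · simp [hg, he, h0]
      · have hpos : 0 < lam r := lt_of_le_of_ne (hlam r) (Ne.symm h0)
        have hs : Real.sqrt (lam r) ≠ 0 := ne_of_gt (Real.sqrt_pos.mpr hpos)
        have hreal : ((Real.sqrt (lam r))⁻¹ : ℝ) * ((Real.sqrt (lam r))⁻¹ : ℝ) * lam r = 1 := by
          rw [← Real.mul_self_sqrt (hlam r)]
          field_simp
          rw [Real.sqrt_sq (Real.sqrt_nonneg _)]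
        simp only [hg, he, if_neg h0, Complex.conj_ofReal]
        rw [← Complex.ofReal_mul]
        rw [show ((((Real.sqrt (lam r))⁻¹ : ℝ) * ((Real.sqrt (lam r))⁻¹ : ℝ) : ℝ) : ℂ) *
          ((lam r : ℝ) : ℂ) = (((((Real.sqrt (lam r))⁻¹ : ℝ) * ((Real.sqrt (lam r))⁻¹ : ℝ) *
          lam r : ℝ)) : ℂ) from by push_cast; ring, hreal, Complex.ofReal_one]
    · rw [Matrix.diagonal_apply_ne _ h, Matrix.diagonal_apply_ne _ h, mul_zero]
  have hα1 : matOpNorm αm ≤ 1 := by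
    refine matOpNorm_le _ 1 zero_le_one fun v => ?_
    have hdot : star ((αm *ᵥ fun r => v r)) ⬝ᵥ (αm *ᵥ fun r => v r) =
        ∑ r, (star (v r) * e r) * v r := by
      rw [Matrix.star_mulVec, dotProduct_mulVec, Matrix.vecMul_vecMul, hαd]
      rw [dotProduct]
      exact Finset.sum_congr rfl fun r _ => by rw [Matrix.vecMul_diagonal, Pi.star_apply]
    have hLHS : ((∑ i, (‖∑ j, αm i j * v j‖ ^ 2 : ℝ) : ℝ) : ℂ) =
        star ((αm *ᵥ fun r => v r)) ⬝ᵥ (αm *ᵥ fun r => v r) := by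
      rw [dotProduct]
      push_cast
      refine Finset.sum_congr rfl fun i _ => ?_
      rw [Pi.star_apply, Matrix.mulVec, dotProduct]
      rw [show (star (∑ j, αm i j * v j) : ℂ) = (starRingEnd ℂ) (∑ j, αm i j * v j) from rfl,
        hterm]
      push_cast; ring
    have hRHS : (∑ r, (star (v r) * e r) * v r) =
        ((∑ r, (if lam r = 0 then 0 else ‖v r‖ ^ 2) : ℝ) : ℂ) := by
      push_cast
      refine Finset.sum_congr rfl fun r _ => ?_
      by_cases h0 : lam r = 0
      · simp [he, h0]
      · simp only [he, if_neg h0, mul_one, RCLike.star_def]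
        rw [hterm]
    have hre : (∑ i, (‖∑ j, αm i j * v j‖ ^ 2 : ℝ)) =
        ∑ r, (if lam r = 0 then 0 else ‖v r‖ ^ 2) := by
      have := hLHS.trans (hdot.trans hRHS)
      exact_mod_cast this
    rw [hre, one_pow, one_mul]
    refine Finset.sum_le_sum fun r _ => ?_
    by_cases h0 : lam r = 0 <;> simp [h0]
  have hαT : matOpNorm αmᴴ ≤ 1 := by rw [matOpNorm_conjTranspose]; exact hα1
  set η : EuclideanSpace ℂ (Fin (n * n)) :=
    (WithLp.toLp 2 (fun i => ηv (finProdFinEquiv.symm i).1 (finProdFinEquiv.symm i).2)) with hηd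
  have hUcol : ∀ r, ∑ s, ‖U s r‖ ^ 2 = 1 := by
    intro r
    have h1 : (Uᴴ * U) r r = 1 := by rw [hU1, Matrix.one_apply_eq]
    rw [Matrix.mul_apply] at h1
    have h2 : ((∑ s, ‖U s r‖ ^ 2 : ℝ) : ℂ) = 1 := by
      rw [← h1]
      push_cast
      exact (Finset.sum_congr rfl fun s _ => by
        rw [Matrix.conjTranspose_apply, RCLike.star_def, hterm]; push_cast; ring).symm
    exact_mod_cast h2
  have hββT : β * βᴴ = M * Mᴴ := by
    rw [hβ, Matrix.conjTranspose_mul, ← Matrix.mul_assoc, Matrix.mul_assoc M, hU2,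
      Matrix.mul_one]
  have hMsum : ∀ p, ∑ r, ‖β p r‖ ^ 2 = ∑ s, ‖M p s‖ ^ 2 := by
    intro p
    have h1 : (β * βᴴ) p p = ((∑ r, ‖β p r‖ ^ 2 : ℝ) : ℂ) := by
      rw [Matrix.mul_apply]
      push_cast
      exact Finset.sum_congr rfl fun r _ => by
        rw [Matrix.conjTranspose_apply, mul_comm, RCLike.star_def, hterm]; push_cast; ring
    have h2 : (M * Mᴴ) p p = ((∑ s, ‖M p s‖ ^ 2 : ℝ) : ℂ) := by
      rw [Matrix.mul_apply]
      push_cast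
      exact Finset.sum_congr rfl fun s _ => by
        rw [Matrix.conjTranspose_apply, mul_comm, RCLike.star_def, hterm]; push_cast; ring
    have := h1.symm.trans (hββT ▸ h2)
    exact_mod_cast this
  have hMtot : ∑ p, ∑ s, ‖M p s‖ ^ 2 ≤ 1 := by
    have h1 : ∑ i, ‖ξ i‖ ^ 2 = ∑ p, ∑ s, ‖M p s‖ ^ 2 :=
      calc ∑ i, ‖ξ i‖ ^ 2 = ∑ z : Fin k × Fin n, ‖ξ (finProdFinEquiv z)‖ ^ 2 :=
            (Equiv.sum_comp finProdFinEquiv (fun i => ‖ξ i‖ ^ 2)).symm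
        _ = ∑ p, ∑ s, ‖ξ (finProdFinEquiv (p, s))‖ ^ 2 := Fintype.sum_prod_type _
        _ = ∑ p, ∑ s, ‖M p s‖ ^ 2 := rfl
    rw [← h1, ← euclid_norm_sq]
    nlinarith [norm_nonneg ξ]
  have hlamtot : ∑ r, lam r ≤ 1 := by
    calc ∑ r, lam r = ∑ r, ∑ p, ‖β p r‖ ^ 2 := Finset.sum_congr rfl fun r _ => hlamsum' r
      _ = ∑ p, ∑ r, ‖β p r‖ ^ 2 := Finset.sum_comm
      _ = ∑ p, ∑ s, ‖M p s‖ ^ 2 := Finset.sum_congr rfl fun p _ => hMsum p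
      _ ≤ 1 := hMtot
  have hηle : ‖η‖ ≤ 1 := by
    have h1 : ‖η‖ ^ 2 = ∑ r, ∑ s, ‖ηv r s‖ ^ 2 := by
      rw [euclid_norm_sq]
      calc ∑ i, ‖η i‖ ^ 2 = ∑ z : Fin n × Fin n, ‖η (finProdFinEquiv z)‖ ^ 2 :=
            (Equiv.sum_comp finProdFinEquiv (fun i => ‖η i‖ ^ 2)).symm
        _ = ∑ r, ∑ s, ‖η (finProdFinEquiv (r, s))‖ ^ 2 := Fintype.sum_prod_type _
        _ = ∑ r, ∑ s, ‖ηv r s‖ ^ 2 := by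
            refine Finset.sum_congr rfl fun r _ => Finset.sum_congr rfl fun s _ => ?_
            rw [hηd]
            simp
    have h2 : ∀ r s, ‖ηv r s‖ ^ 2 = lam r * ‖U s r‖ ^ 2 := by
      intro r s
      rw [hηv]
      simp only [norm_mul, norm_star, Complex.norm_real, Real.norm_eq_abs,
        abs_of_nonneg (Real.sqrt_nonneg _)]
      rw [mul_pow, Real.sq_sqrt (hlam r)]
    have h3 : ‖η‖ ^ 2 ≤ 1 := by
      rw [h1]
      calc ∑ r, ∑ s, ‖ηv r s‖ ^ 2 = ∑ r, lam r * ∑ s, ‖U s r‖ ^ 2 := by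
            refine Finset.sum_congr rfl fun r _ => ?_
            rw [Finset.mul_sum]
            exact Finset.sum_congr rfl fun s _ => h2 r s
        _ = ∑ r, lam r := Finset.sum_congr rfl fun r _ => by rw [hUcol r, mul_one]
        _ ≤ 1 := hlamtot
    nlinarith [norm_nonneg η]
  set y : Matrix (Fin n) (Fin n) X := scalarMulRight (scalarMulLeft αmᴴ x) αm with hy
  have hWy : W.W n y ≤ 1 := by
    have h2 := W.cond_WII k n αmᴴ x
    rw [Matrix.conjTranspose_conjTranspose] at h2
    have hnn : (0:ℝ) ≤ matOpNorm αmᴴ := norm_nonneg _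
    nlinarith [W.nonneg k x]
  have hyentry : ∀ r r' s t, φ (y r r') s t =
      ∑ q, ∑ p, (αm q r' * (starRingEnd ℂ) (αm p r)) * φ (x p q) s t := by
    intro r r' s t
    have h1 : y r r' = ∑ q, αm q r' • (∑ p, (starRingEnd ℂ) (αm p r) • x p q) := by
      show (scalarMulRight (scalarMulLeft αmᴴ x) αm) r r' = _
      show ∑ q, αm q r' • (scalarMulLeft αmᴴ x) r q = _
      refine Finset.sum_congr rfl fun q _ => ?_
      have h2 : (scalarMulLeft αmᴴ x) r q = ∑ p, (starRingEnd ℂ) (αm p r) • x p q := by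
        show ∑ p, αmᴴ r p • x p q = _
        exact Finset.sum_congr rfl fun p _ => by rw [Matrix.conjTranspose_apply]; rfl
      rw [h2]
    rw [h1, map_sum]
    rw [show ((∑ q, φ (αm q r' • ∑ p, (starRingEnd ℂ) (αm p r) • x p q)) s t)
        = ∑ q, (φ (αm q r' • ∑ p, (starRingEnd ℂ) (αm p r) • x p q)) s t from by
      rw [Matrix.sum_apply]]
    refine Finset.sum_congr rfl fun q _ => ?_
    rw [_root_.map_smul, map_sum]
    rw [Matrix.smul_apply]
    rw [show ((∑ p, φ ((starRingEnd ℂ) (αm p r) • x p q)) s t)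
        = ∑ p, (φ ((starRingEnd ℂ) (αm p r) • x p q)) s t from by
      rw [Matrix.sum_apply]]
    rw [Finset.smul_sum]
    refine Finset.sum_congr rfl fun p _ => ?_
    rw [_root_.map_smul, Matrix.smul_apply]
    simp only [smul_eq_mul]
    ring
  have hflatx : ∀ (z w : Fin k × Fin n), flatten (Matrix.map x ⇑φ) (finProdFinEquiv z)
      (finProdFinEquiv w) = φ (x z.1 w.1) z.2 w.2 := by
    intro z w
    rw [flatten_pair]
    rfl
  have hflaty : ∀ (z w : Fin n × Fin n), flatten (Matrix.map y ⇑φ) (finProdFinEquiv z)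
      (finProdFinEquiv w) = φ (y z.1 w.1) z.2 w.2 := by
    intro z w
    rw [flatten_pair]
    rfl
  have hL : (inner ℂ ξ (LinearMap.toContinuousLinearMap
        (Matrix.toEuclideanLin (flatten (Matrix.map x ⇑φ))) ξ) : ℂ) =
      ∑ z : Fin k × Fin n, ∑ w : Fin k × Fin n, ∑ r : Fin n, ∑ r' : Fin n,
        ((starRingEnd ℂ) (αm z.1 r) * (starRingEnd ℂ) (ηv r z.2)) *
          (φ (x z.1 w.1) z.2 w.2 * (αm w.1 r' * ηv r' w.2)) := by
    rw [inner_quad]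
    calc ∑ i, ∑ j, (starRingEnd ℂ) (ξ i) * (flatten (Matrix.map x ⇑φ) i j * ξ j)
        = ∑ z : Fin k × Fin n, ∑ j, (starRingEnd ℂ) (ξ (finProdFinEquiv z)) *
            (flatten (Matrix.map x ⇑φ) (finProdFinEquiv z) j * ξ j) :=
          (Equiv.sum_comp finProdFinEquiv _).symm
      _ = ∑ z : Fin k × Fin n, ∑ w : Fin k × Fin n, (starRingEnd ℂ) (ξ (finProdFinEquiv z)) *
            (flatten (Matrix.map x ⇑φ) (finProdFinEquiv z) (finProdFinEquiv w) *
              ξ (finProdFinEquiv w)) :=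
          Finset.sum_congr rfl fun z _ => (Equiv.sum_comp finProdFinEquiv _).symm
      _ = ∑ z : Fin k × Fin n, ∑ w : Fin k × Fin n, (starRingEnd ℂ) (M z.1 z.2) *
            (φ (x z.1 w.1) z.2 w.2 * M w.1 w.2) := by
          refine Finset.sum_congr rfl fun z _ => Finset.sum_congr rfl fun w _ => ?_
          rw [hflatx z w]
          rfl
      _ = ∑ z : Fin k × Fin n, ∑ w : Fin k × Fin n,
            (∑ r, (starRingEnd ℂ) (αm z.1 r) * (starRingEnd ℂ) (ηv r z.2)) *
            (φ (x z.1 w.1) z.2 w.2 * (∑ r', αm w.1 r' * ηv r' w.2)) := by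
          refine Finset.sum_congr rfl fun z _ => Finset.sum_congr rfl fun w _ => ?_
          rw [← key z.1 z.2, ← key w.1 w.2, map_sum]
          congr 1
          exact Finset.sum_congr rfl fun r _ => map_mul _ _ _
      _ = ∑ z : Fin k × Fin n, ∑ w : Fin k × Fin n, ∑ r : Fin n, ∑ r' : Fin n,
            ((starRingEnd ℂ) (αm z.1 r) * (starRingEnd ℂ) (ηv r z.2)) *
            (φ (x z.1 w.1) z.2 w.2 * (αm w.1 r' * ηv r' w.2)) := by
          refine Finset.sum_congr rfl fun z _ => Finset.sum_congr rfl fun w _ => ?_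
          rw [Finset.sum_mul]
          refine Finset.sum_congr rfl fun r _ => ?_
          rw [Finset.mul_sum, Finset.mul_sum]
  have hR : (inner ℂ η (LinearMap.toContinuousLinearMap
        (Matrix.toEuclideanLin (flatten (Matrix.map y ⇑φ))) η) : ℂ) =
      ∑ z : Fin n × Fin n, ∑ w : Fin n × Fin n, ∑ q : Fin k, ∑ p : Fin k,
        (starRingEnd ℂ) (ηv z.1 z.2) *
          (((αm q w.1 * (starRingEnd ℂ) (αm p z.1)) * φ (x p q) z.2 w.2) * ηv w.1 w.2) := by
    rw [inner_quad]
    calc ∑ i, ∑ j, (starRingEnd ℂ) (η i) * (flatten (Matrix.map y ⇑φ) i j * η j)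
        = ∑ z : Fin n × Fin n, ∑ j, (starRingEnd ℂ) (η (finProdFinEquiv z)) *
            (flatten (Matrix.map y ⇑φ) (finProdFinEquiv z) j * η j) :=
          (Equiv.sum_comp finProdFinEquiv _).symm
      _ = ∑ z : Fin n × Fin n, ∑ w : Fin n × Fin n, (starRingEnd ℂ) (η (finProdFinEquiv z)) *
            (flatten (Matrix.map y ⇑φ) (finProdFinEquiv z) (finProdFinEquiv w) *
              η (finProdFinEquiv w)) :=
          Finset.sum_congr rfl fun z _ => (Equiv.sum_comp finProdFinEquiv _).symm
      _ = ∑ z : Fin n × Fin n, ∑ w : Fin n × Fin n, (starRingEnd ℂ) (ηv z.1 z.2) *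
            (φ (y z.1 w.1) z.2 w.2 * ηv w.1 w.2) := by
          refine Finset.sum_congr rfl fun z _ => Finset.sum_congr rfl fun w _ => ?_
          rw [hflaty z w]
          have hez : ∀ u : Fin n × Fin n, η (finProdFinEquiv u) = ηv u.1 u.2 := by
            intro u
            show ηv (finProdFinEquiv.symm (finProdFinEquiv u)).1
              (finProdFinEquiv.symm (finProdFinEquiv u)).2 = _
            rw [Equiv.symm_apply_apply]
          rw [hez z, hez w]
      _ = ∑ z : Fin n × Fin n, ∑ w : Fin n × Fin n, (starRingEnd ℂ) (ηv z.1 z.2) *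
            ((∑ q, ∑ p, (αm q w.1 * (starRingEnd ℂ) (αm p z.1)) * φ (x p q) z.2 w.2) *
              ηv w.1 w.2) := by
          refine Finset.sum_congr rfl fun z _ => Finset.sum_congr rfl fun w _ => ?_
          rw [hyentry z.1 w.1 z.2 w.2]
      _ = ∑ z : Fin n × Fin n, ∑ w : Fin n × Fin n, ∑ q : Fin k, ∑ p : Fin k,
            (starRingEnd ℂ) (ηv z.1 z.2) *
            (((αm q w.1 * (starRingEnd ℂ) (αm p z.1)) * φ (x p q) z.2 w.2) * ηv w.1 w.2) := by
          refine Finset.sum_congr rfl fun z _ => Finset.sum_congr rfl fun w _ => ?_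
          rw [Finset.sum_mul, Finset.mul_sum]
          refine Finset.sum_congr rfl fun q _ => ?_
          rw [Finset.sum_mul, Finset.mul_sum]
  have hinner : (inner ℂ ξ (LinearMap.toContinuousLinearMap
        (Matrix.toEuclideanLin (flatten (Matrix.map x ⇑φ))) ξ) : ℂ) =
      (inner ℂ η (LinearMap.toContinuousLinearMap
        (Matrix.toEuclideanLin (flatten (Matrix.map y ⇑φ))) η) : ℂ) := by
    rw [hL, hR]
    calc ∑ z : Fin k × Fin n, ∑ w : Fin k × Fin n, ∑ r : Fin n, ∑ r' : Fin n,
          ((starRingEnd ℂ) (αm z.1 r) * (starRingEnd ℂ) (ηv r z.2)) *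
            (φ (x z.1 w.1) z.2 w.2 * (αm w.1 r' * ηv r' w.2))
        = ∑ z : Fin k × Fin n, ∑ w : Fin k × Fin n, ∑ v : Fin n × Fin n,
            ((starRingEnd ℂ) (αm z.1 v.1) * (starRingEnd ℂ) (ηv v.1 z.2)) *
            (φ (x z.1 w.1) z.2 w.2 * (αm w.1 v.2 * ηv v.2 w.2)) :=
          Finset.sum_congr rfl fun z _ => Finset.sum_congr rfl fun w _ =>
            by rw [sumCollapse]
      _ = ∑ z : Fin k × Fin n, ∑ u : (Fin k × Fin n) × (Fin n × Fin n),
            ((starRingEnd ℂ) (αm z.1 u.2.1) * (starRingEnd ℂ) (ηv u.2.1 z.2)) *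
            (φ (x z.1 u.1.1) z.2 u.1.2 * (αm u.1.1 u.2.2 * ηv u.2.2 u.1.2)) :=
          Finset.sum_congr rfl fun z _ => by rw [sumCollapse]
      _ = ∑ t : (Fin k × Fin n) × (Fin k × Fin n) × (Fin n × Fin n),
            ((starRingEnd ℂ) (αm t.1.1 t.2.2.1) * (starRingEnd ℂ) (ηv t.2.2.1 t.1.2)) *
            (φ (x t.1.1 t.2.1.1) t.1.2 t.2.1.2 * (αm t.2.1.1 t.2.2.2 * ηv t.2.2.2 t.2.1.2)) :=
          by rw [sumCollapse]
      _ = ∑ t : (Fin n × Fin n) × (Fin n × Fin n) × (Fin k × Fin k),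
            (starRingEnd ℂ) (ηv t.1.1 t.1.2) *
            (((αm t.2.2.1 t.2.1.1 * (starRingEnd ℂ) (αm t.2.2.2 t.1.1)) *
              φ (x t.2.2.2 t.2.2.1) t.1.2 t.2.1.2) * ηv t.2.1.1 t.2.1.2) := by
          refine Fintype.sum_equiv
            ⟨fun t => ((t.2.2.1, t.1.2), ((t.2.2.2, t.2.1.2), (t.2.1.1, t.1.1))),
             fun v => ((v.2.2.2, v.1.2), ((v.2.2.1, v.2.1.2), (v.1.1, v.2.1.1))),
             fun t => rfl, fun v => rfl⟩ _ _ fun t => ?_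
          simp only [Equiv.coe_fn_mk]
          ring
      _ = ∑ z : Fin n × Fin n, ∑ u : (Fin n × Fin n) × (Fin k × Fin k),
            (starRingEnd ℂ) (ηv z.1 z.2) *
            (((αm u.2.1 u.1.1 * (starRingEnd ℂ) (αm u.2.2 z.1)) * φ (x u.2.2 u.2.1) z.2 u.1.2) *
              ηv u.1.1 u.1.2) := by rw [sumCollapse]
      _ = ∑ z : Fin n × Fin n, ∑ w : Fin n × Fin n, ∑ v : Fin k × Fin k,
            (starRingEnd ℂ) (ηv z.1 z.2) *
            (((αm v.1 w.1 * (starRingEnd ℂ) (αm v.2 z.1)) * φ (x v.2 v.1) z.2 w.2) *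
              ηv w.1 w.2) :=
          Finset.sum_congr rfl fun z _ => by rw [sumCollapse]
      _ = ∑ z : Fin n × Fin n, ∑ w : Fin n × Fin n, ∑ q : Fin k, ∑ p : Fin k,
            (starRingEnd ℂ) (ηv z.1 z.2) *
            (((αm q w.1 * (starRingEnd ℂ) (αm p z.1)) * φ (x p q) z.2 w.2) * ηv w.1 w.2) :=
          Finset.sum_congr rfl fun z _ => Finset.sum_congr rfl fun w _ =>
            by rw [sumCollapse]
  refine ⟨y, hWy, ?_⟩
  rw [hinner]
  exact le_numRadius _ η hηle

end Compress
/-- Smith's lemma for numerical radius operator spaces: for a linear map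
`φ : X → M_n(ℂ)`, the 𝒲-completely bounded norm of `φ` is attained at level `n`. -/
theorem stmt_2 {X : Type u} [AddCommGroup X] [Module ℂ X] (W : NRNorm X)
    (n : ℕ) (hn : 1 ≤ n) (φ : X →ₗ[ℂ] Matrix (Fin n) (Fin n) ℂ) :
    cbNorm W.W (fun k a => matNumRadius (flatten a)) ⇑φ =
      ⨆ (x : Matrix (Fin n) (Fin n) X) (_ : W.W n x ≤ 1),
        ENNReal.ofReal (matNumRadius (flatten (x.map ⇑φ))) := by
  unfold cbNorm
  apply le_antisymm
  · refine iSup_le fun m => iSup_le fun x => iSup_le fun hx => ?_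
    set T := LinearMap.toContinuousLinearMap (Matrix.toEuclideanLin (flatten (Matrix.map x ⇑φ)))
      with hT
    have hmono : Monotone ENNReal.ofReal := fun a b h => ENNReal.ofReal_le_ofReal h
    have heq : ENNReal.ofReal (matNumRadius (flatten (Matrix.map x ⇑φ))) =
        ⨆ ξ : {ξ : EuclideanSpace ℂ (Fin (m * n)) // ‖ξ‖ ≤ 1},
          ENNReal.ofReal ‖(inner ℂ (ξ : EuclideanSpace ℂ (Fin (m * n))) (T ξ) : ℂ)‖ :=
      Monotone.map_ciSup_of_continuousAt ENNReal.continuous_ofReal.continuousAt hmono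
        (numRadius_bddAbove T)
    rw [heq]
    refine iSup_le fun ξ => ?_
    obtain ⟨y, hy1, hy2⟩ := compress W φ x hx (ξ : EuclideanSpace ℂ (Fin (m * n))) ξ.2
    calc ENNReal.ofReal ‖(inner ℂ (ξ : EuclideanSpace ℂ (Fin (m * n))) (T ξ) : ℂ)‖
        ≤ ENNReal.ofReal (matNumRadius (flatten (Matrix.map y ⇑φ))) :=
          ENNReal.ofReal_le_ofReal hy2
      _ ≤ ⨆ _ : W.W n y ≤ 1, ENNReal.ofReal (matNumRadius (flatten (Matrix.map y ⇑φ))) :=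
          le_iSup (fun _ : W.W n y ≤ 1 => ENNReal.ofReal
            (matNumRadius (flatten (Matrix.map y ⇑φ)))) hy1
      _ ≤ ⨆ (z : Matrix (Fin n) (Fin n) X) (_ : W.W n z ≤ 1),
            ENNReal.ofReal (matNumRadius (flatten (Matrix.map z ⇑φ))) :=
          le_iSup (fun z : Matrix (Fin n) (Fin n) X => ⨆ _ : W.W n z ≤ 1,
            ENNReal.ofReal (matNumRadius (flatten (Matrix.map z ⇑φ)))) y
  · exact le_iSup (fun m => ⨆ (x : Matrix (Fin m) (Fin m) X) (_ : W.W m x ≤ 1),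
      ENNReal.ofReal (matNumRadius (flatten (x.map ⇑φ)))) n
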